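/- Let W be a vector space and suppose a(x0,x), b(x0,x), c(x0,x) ∈ E(W,r) are pairwise mutually local. Then for any (m0,m) ∈ ℤ×ℤ^r, the element a(x0,x)_{m0,m} b(x0,x) of E(W,r) is mutually local with c(x0,x). -/
import Mathlib


/-- Generalized binomial coefficient `C(n,k) = n(n-1)⋯(n-k+1)/k!` for an integer `n`. -/
noncomputable def cchoose (n : ℤ) (k : ℕ) : ℂ :=
  (∏ i ∈ Finset.range k, ((n : ℂ) - (i : ℂ))) / (Nat.factorial k : ℂ)

/-- Coefficients of an element of `E(W,r) = Hom(W, W[[x1^{±1},…,xr^{±1}]]((x0)))`: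
`A n m` is the coefficient of `x0^{-n-1} x^{-m}`. -/
abbrev ECoeff (r : ℕ) (W : Type*) := ℤ → (Fin r → ℤ) → W → W

/-- Membership in `E(W,r)`: on each vector the `x0`-powers are bounded below
(only finitely many negative powers of `x0`). -/
def ETrunc {r : ℕ} {W : Type*} [AddCommGroup W] (A : ECoeff r W) : Prop :=
  ∀ w : W, ∃ N : ℤ, ∀ n : ℤ, N ≤ n → ∀ m : Fin r → ℤ, A n m w = 0

/-- Mutual locality with witness `k`:
`(x0-y0)^k a(x0,x) b(y0,y) = (x0-y0)^k b(y0,y) a(x0,x)`, stated coefficientwise: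
both sides are the coefficients of `x0^P y0^Q x^M y^N`, applied to `w`. -/
def LocalTo {r : ℕ} {W : Type*} [AddCommGroup W] [Module ℂ W]
    (k : ℕ) (A B : ECoeff r W) : Prop :=
  ∀ (w : W) (P Q : ℤ) (M N : Fin r → ℤ),
    ∑ t ∈ Finset.range (k+1), ((-1:ℂ)^t * (k.choose t : ℂ)) •
      A ((k:ℤ)-t-P-1) (-M) (B ((t:ℤ)-Q-1) (-N) w)
    = ∑ t ∈ Finset.range (k+1), ((-1:ℂ)^t * (k.choose t : ℂ)) •
      B ((t:ℤ)-Q-1) (-N) (A ((k:ℤ)-t-P-1) (-M) w)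

/-- The component `a(y0,y)_{m0,m} b(y0,y)` of `Y_E(a(y0,y); z0,z) b(y0,y)`,
given (for mutually local `a, b`) by the residue formula
`a_{m0,m}b = Res_{x0} Res_x x^{m-1} y^{-m}
  [ (x0-y0)^{m0} a(x0,x)b(y0,y) - (-y0+x0)^{m0} b(y0,y)a(x0,x) ]`,
stated coefficientwise: `prodCoeff A B m0 m n q w` is the coefficient of
`y0^{-n-1} y^{-q}` applied to `w`.  Here `(x0-y0)^{m0}` is expanded in
nonnegative powers of `y0` and `(-y0+x0)^{m0}` in nonnegative powers of `x0`. -/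
noncomputable def prodCoeff {r : ℕ} {W : Type*} [AddCommGroup W] [Module ℂ W]
    (A B : ECoeff r W) (m0 : ℤ) (m : Fin r → ℤ) : ECoeff r W :=
  fun n q w =>
    (∑ᶠ t : ℕ, ((-1:ℂ)^t * cchoose m0 t) • A (m0 - t) m (B (n + t) (q - m) w))
    - ∑ᶠ s : ℕ, ((-1:ℂ)^(m0 - (s:ℤ)) * cchoose m0 s) • B (m0 - s + n) (q - m) (A s m w)

open Finset

namespace Stmt13Aux

variable {W : Type*} [AddCommGroup W] [Module ℂ W]

abbrev Arr (W : Type*) := ℤ → ℤ → ℤ → W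

def Sx : Module.End ℂ (Arr W) where
  toFun F := fun p q s => F (p+1) q s
  map_add' _ _ := rfl
  map_smul' _ _ := rfl

def Sy : Module.End ℂ (Arr W) where
  toFun F := fun p q s => F p (q+1) s
  map_add' _ _ := rfl
  map_smul' _ _ := rfl

def Sz : Module.End ℂ (Arr W) where
  toFun F := fun p q s => F p q (s+1)
  map_add' _ _ := rfl
  map_smul' _ _ := rfl

def Dxy : Module.End ℂ (Arr W) := Sx - Sy
def Dxz : Module.End ℂ (Arr W) := Sx - Sz
def Dyz : Module.End ℂ (Arr W) := Sy - Sz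

lemma Dxy_apply (F : Arr W) (p q s : ℤ) : Dxy F p q s = F (p+1) q s - F p (q+1) s := rfl
lemma Dxz_apply (F : Arr W) (p q s : ℤ) : Dxz F p q s = F (p+1) q s - F p q (s+1) := rfl
lemma Dyz_apply (F : Arr W) (p q s : ℤ) : Dyz F p q s = F p (q+1) s - F p q (s+1) := rfl

lemma dyz_eq : (Dyz : Module.End ℂ (Arr W)) = Dxz - Dxy := by
  unfold Dxy Dxz Dyz; abel

lemma comm_xy_xz : Commute (Dxy : Module.End ℂ (Arr W)) Dxz := by
  show Dxy * Dxz = Dxz * Dxy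
  refine LinearMap.ext fun F => ?_
  funext p q s
  simp only [Module.End.mul_apply, Dxy_apply, Dxz_apply]
  abel

lemma comm_yz_xz : Commute (Dyz : Module.End ℂ (Arr W)) Dxz := by
  show Dyz * Dxz = Dxz * Dyz
  refine LinearMap.ext fun F => ?_
  funext p q s
  simp only [Module.End.mul_apply, Dyz_apply, Dxz_apply]
  abel

/-- the generic two-slot difference operator -/
def dd (G : ℤ → ℤ → W) : ℤ → ℤ → W := fun u v => G (u+1) v - G u (v+1)

lemma dd_pow (n : ℕ) (G : ℤ → ℤ → W) (u v : ℤ) :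
    dd^[n] G u v
      = ∑ t ∈ range (n+1), ((-1:ℂ)^t * (n.choose t : ℂ)) • G (u + n - t) (v + t) := by
  induction n generalizing G u v with
  | zero => simp
  | succ n ih =>
    rw [Function.iterate_succ_apply, ih]
    set X : ℕ → W := fun t => G (u + ((n:ℤ)+1) - t) (v + t) with hX
    have hXdef : ∀ t : ℕ, X t = G (u + ((n:ℤ)+1) - (t:ℤ)) (v + (t:ℤ)) := fun _ => rfl
    have hdd : ∀ t : ℕ, dd G (u + (n:ℤ) - t) (v + t) = X t - X (t+1) := by
      intro t
      show G (u + (n:ℤ) - t + 1) (v + t) - G (u + (n:ℤ) - t) (v + t + 1) = _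
      rw [hXdef t, hXdef (t+1),
        show u + (n:ℤ) - t + 1 = u + ((n:ℤ)+1) - t from by ring,
        show u + (n:ℤ) - (t:ℤ) = u + ((n:ℤ)+1) - ((t+1:ℕ):ℤ) from by push_cast; ring,
        show v + (t:ℤ) + 1 = v + ((t+1:ℕ):ℤ) from by push_cast; ring]
    simp only [hdd, smul_sub, Finset.sum_sub_distrib]
    have hRHS : ∑ t ∈ range (n+1+1), ((-1:ℂ)^t * ((n+1).choose t : ℂ)) • G (u + ((n+1:ℕ):ℤ) - t) (v + t)
        = ∑ t ∈ range (n+1+1), ((-1:ℂ)^t * ((n+1).choose t : ℂ)) • X t := by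
      refine Finset.sum_congr rfl fun t _ => ?_
      rw [hXdef t, show u + ((n+1:ℕ):ℤ) - (t:ℤ) = u + ((n:ℤ)+1) - (t:ℤ) from by push_cast; ring]
    rw [hRHS, Finset.sum_range_succ' (fun t => ((-1:ℂ)^t * ((n+1).choose t : ℂ)) • X t) (n+1)]
    have hsplit : ∀ t : ℕ, ((-1:ℂ)^(t+1) * ((n+1).choose (t+1) : ℂ)) • X (t+1)
        = ((-1:ℂ)^(t+1) * ((n).choose (t+1) : ℂ)) • X (t+1) - ((-1:ℂ)^t * ((n).choose t : ℂ)) • X (t+1) := by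
      intro t
      have h : (((n+1)).choose (t+1) : ℂ) = ((n).choose (t+1) : ℂ) + ((n).choose t : ℂ) := by
        rw [Nat.choose_succ_succ]; push_cast; ring
      rw [h, ← sub_smul]; congr 1; rw [pow_succ]; ring
    simp only [hsplit, Finset.sum_sub_distrib]
    have hback : ∑ t ∈ range (n+1), ((-1:ℂ)^(t+1) * ((n).choose (t+1) : ℂ)) • X (t+1)
        = ∑ t ∈ range (n+1), ((-1:ℂ)^t * ((n).choose t : ℂ)) • X t - ((-1:ℂ)^0 * ((n).choose 0 : ℂ)) • X 0 := by
      have h2 := Finset.sum_range_succ' (fun t => ((-1:ℂ)^t * ((n).choose t : ℂ)) • X t) (n+1)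
      have h3 : ∑ t ∈ range (n+1+1), ((-1:ℂ)^t * ((n).choose t : ℂ)) • X t
          = ∑ t ∈ range (n+1), ((-1:ℂ)^t * ((n).choose t : ℂ)) • X t := by
        rw [Finset.sum_range_succ]; simp
      rw [h3] at h2
      exact eq_sub_iff_add_eq.mpr h2.symm
    rw [hback, show ((-1:ℂ)^0 * ((n+1).choose 0 : ℂ)) • X 0 = ((-1:ℂ)^0 * ((n).choose 0 : ℂ)) • X 0 from by norm_num]
    abel

lemma dxy_pow_apply (n : ℕ) (F : Arr W) (p q s : ℤ) :
    (Dxy ^ n) F p q s = dd^[n] (fun u v => F u v s) p q := by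
  induction n generalizing F with
  | zero => simp
  | succ n ih =>
    rw [pow_succ, Module.End.mul_apply, ih (Dxy F), Function.iterate_succ_apply]
    rfl

lemma dxz_pow_apply (n : ℕ) (F : Arr W) (p q s : ℤ) :
    (Dxz ^ n) F p q s = dd^[n] (fun u v => F u q v) p s := by
  induction n generalizing F with
  | zero => simp
  | succ n ih =>
    rw [pow_succ, Module.End.mul_apply, ih (Dxz F), Function.iterate_succ_apply]
    rfl

lemma dyz_pow_apply (n : ℕ) (F : Arr W) (p q s : ℤ) :
    (Dyz ^ n) F p q s = dd^[n] (fun u v => F p u v) q s := by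
  induction n generalizing F with
  | zero => simp
  | succ n ih =>
    rw [pow_succ, Module.End.mul_apply, ih (Dyz F), Function.iterate_succ_apply]
    rfl

lemma pow_xy (n : ℕ) (F : Arr W) (p q s : ℤ) :
    (Dxy ^ n) F p q s
      = ∑ t ∈ range (n+1), ((-1:ℂ)^t * (n.choose t : ℂ)) • F (p + n - t) (q + t) s := by
  rw [dxy_pow_apply, dd_pow]

lemma pow_xz (n : ℕ) (F : Arr W) (p q s : ℤ) :
    (Dxz ^ n) F p q s
      = ∑ t ∈ range (n+1), ((-1:ℂ)^t * (n.choose t : ℂ)) • F (p + n - t) q (s + t) := by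
  rw [dxz_pow_apply, dd_pow]

lemma pow_yz (n : ℕ) (F : Arr W) (p q s : ℤ) :
    (Dyz ^ n) F p q s
      = ∑ t ∈ range (n+1), ((-1:ℂ)^t * (n.choose t : ℂ)) • F p (q + n - t) (s + t) := by
  rw [dyz_pow_apply, dd_pow]

end Stmt13Aux

section Cchoose

lemma cchoose_pascal (m0 : ℤ) (i : ℕ) :
    cchoose (m0+1) (i+1) = cchoose m0 (i+1) + cchoose m0 i := by
  unfold cchoose
  have hfac : ((i+1).factorial : ℂ) = ((i:ℂ)+1) * (i.factorial : ℂ) := by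
    rw [Nat.factorial_succ]; push_cast; ring
  have hne : (i.factorial : ℂ) ≠ 0 := Nat.cast_ne_zero.mpr (Nat.factorial_ne_zero i)
  have hne1 : ((i:ℂ)+1) ≠ 0 := Nat.cast_add_one_ne_zero i
  have e1 : ∏ t ∈ Finset.range (i+1), ((((m0+1):ℤ):ℂ) - (t:ℂ))
      = (((m0:ℤ):ℂ)+1) * ∏ t ∈ Finset.range i, (((m0:ℤ):ℂ) - (t:ℂ)) := by
    rw [Finset.prod_range_succ']
    have h0 : (((m0+1) : ℤ):ℂ) - ((0:ℕ):ℂ) = ((m0:ℤ):ℂ)+1 := by push_cast; ring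
    have hstep : ∀ t : ℕ, (((m0+1) : ℤ):ℂ) - ((t+1:ℕ):ℂ) = ((m0:ℤ):ℂ) - (t:ℂ) := by
      intro t; push_cast; ring
    rw [h0, Finset.prod_congr rfl (fun t _ => hstep t)]
    ring
  have e2 : ∏ t ∈ Finset.range (i+1), (((m0:ℤ):ℂ) - (t:ℂ))
      = (∏ t ∈ Finset.range i, (((m0:ℤ):ℂ) - (t:ℂ))) * (((m0:ℤ):ℂ) - (i:ℂ)) :=
    Finset.prod_range_succ _ _
  rw [e1, e2, hfac]
  field_simp
  ring

lemma cchoose_zero (m0 : ℤ) : cchoose m0 0 = 1 := by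
  unfold cchoose; simp

lemma cchoose_nat_eq (n i : ℕ) (h : i ≤ n) : cchoose (n:ℤ) i = (n.choose i : ℂ) := by
  unfold cchoose
  have hne : (i.factorial : ℂ) ≠ 0 := Nat.cast_ne_zero.mpr (Nat.factorial_ne_zero i)
  have hdesc : ∏ t ∈ Finset.range i, (((n:ℤ):ℂ) - (t:ℂ)) = (n.descFactorial i : ℂ) := by
    clear hne
    induction i with
    | zero => simp
    | succ i ih =>
      have hi : i ≤ n := Nat.le_of_succ_le h
      rw [Finset.prod_range_succ, ih hi, Nat.descFactorial_succ]
      have hc : ((n - i : ℕ) : ℂ) = ((n:ℤ):ℂ) - (i:ℂ) := by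
        push_cast [Nat.cast_sub hi]; ring
      rw [← hc]
      push_cast
      ring
  rw [hdesc, Nat.descFactorial_eq_factorial_mul_choose]
  push_cast
  rw [mul_comm, mul_div_assoc, div_self hne, mul_one]

lemma cchoose_nat_zero (n i : ℕ) (h : n < i) : cchoose (n:ℤ) i = 0 := by
  unfold cchoose
  rw [Finset.prod_eq_zero (Finset.mem_range.mpr h) (by push_cast; ring)]
  simp

namespace Stmt13Aux

variable {W : Type*} [AddCommGroup W] [Module ℂ W]

noncomputable def cxy (m0 : ℤ) (i : ℕ) : ℂ := (-1:ℂ)^i * cchoose m0 i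
noncomputable def cyx (m0 : ℤ) (j : ℕ) : ℂ := (-1:ℂ)^(m0 - (j:ℤ)) * cchoose m0 j

lemma cxy_zero (m0 : ℤ) : cxy m0 0 = 1 := by simp [cxy, cchoose_zero]

lemma cxy_succ (m0 : ℤ) (i : ℕ) : cxy (m0+1) (i+1) = cxy m0 (i+1) - cxy m0 i := by
  unfold cxy
  rw [cchoose_pascal]
  rw [pow_succ]
  ring

lemma cyx_zero_succ (m0 : ℤ) : cyx (m0+1) 0 = -cyx m0 0 := by
  unfold cyx
  rw [cchoose_zero, cchoose_zero]
  rw [show m0 + 1 - ((0:ℕ):ℤ) = (m0 - ((0:ℕ):ℤ)) + 1 by push_cast; ring]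
  rw [zpow_add_one₀ (by norm_num : (-1:ℂ) ≠ 0)]
  ring

lemma cyx_succ (m0 : ℤ) (j : ℕ) : cyx (m0+1) (j+1) = cyx m0 j - cyx m0 (j+1) := by
  unfold cyx
  rw [cchoose_pascal]
  have e1 : m0 + 1 - ((j+1:ℕ):ℤ) = m0 - (j:ℤ) := by push_cast; ring
  have e2 : m0 - ((j+1:ℕ):ℤ) = (m0 - (j:ℤ)) - 1 := by push_cast; ring
  rw [e1, e2, zpow_sub_one₀ (by norm_num : (-1:ℂ) ≠ 0)]
  ring

noncomputable def mxy (m0 : ℤ) (F : Arr W) : Arr W :=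
  fun p q s => ∑ᶠ i : ℕ, cxy m0 i • F (p + m0 - i) (q + i) s

noncomputable def myx (m0 : ℤ) (F : Arr W) : Arr W :=
  fun p q s => ∑ᶠ j : ℕ, cyx m0 j • F (p + j) (q + m0 - j) s

/-- vanishing for large q, uniformly in p, locally in s -/
def QT (F : Arr W) : Prop := ∀ s : ℤ, ∃ T : ℤ, ∀ q : ℤ, T ≤ q → ∀ p : ℤ, F p q s = 0
/-- vanishing for large p, uniformly in q, locally in s -/
def PT (F : Arr W) : Prop := ∀ s : ℤ, ∃ T : ℤ, ∀ p : ℤ, T ≤ p → ∀ q : ℤ, F p q s = 0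

lemma finsum_nat_eq_sum (f : ℕ → W) (T : ℕ) (h : ∀ i, T ≤ i → f i = 0) :
    ∑ᶠ i, f i = ∑ i ∈ range T, f i := by
  refine finsum_eq_sum_of_support_subset f fun i hi => ?_
  simp only [Finset.coe_range, Set.mem_Iio]
  by_contra hc
  exact hi (h i (by omega))

lemma qt_bound {F : Arr W} (hF : QT F) (q s : ℤ) :
    ∃ T : ℕ, ∀ i : ℕ, T ≤ i → ∀ p q', q' = q + (i:ℤ) → F p q' s = 0 := by
  obtain ⟨T0, hT0⟩ := hF s
  refine ⟨(T0 - q).toNat, fun i hi p q' hq' => hT0 q' (by omega) p⟩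

lemma pt_bound {F : Arr W} (hF : PT F) (p s : ℤ) :
    ∃ T : ℕ, ∀ j : ℕ, T ≤ j → ∀ q p', p' = p + (j:ℤ) → F p' q s = 0 := by
  obtain ⟨T0, hT0⟩ := hF s
  refine ⟨(T0 - p).toNat, fun j hj q p' hp' => hT0 p' (by omega) q⟩

lemma mxy_eq_sum {F : Arr W} {m0 p q s : ℤ} {T : ℕ}
    (h : ∀ i : ℕ, T ≤ i → F (p + m0 - i) (q + i) s = 0) :
    mxy m0 F p q s = ∑ i ∈ range T, cxy m0 i • F (p + m0 - i) (q + i) s :=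
  finsum_nat_eq_sum _ T fun i hi => by rw [h i hi, smul_zero]

lemma myx_eq_sum {F : Arr W} {m0 p q s : ℤ} {T : ℕ}
    (h : ∀ j : ℕ, T ≤ j → F (p + j) (q + m0 - j) s = 0) :
    myx m0 F p q s = ∑ j ∈ range T, cyx m0 j • F (p + j) (q + m0 - j) s :=
  finsum_nat_eq_sum _ T fun j hj => by rw [h j hj, smul_zero]


section MD

variable {W : Type*} [AddCommGroup W] [Module ℂ W]

lemma dxy_mxy {F : Arr W} (hF : QT F) (m0 p q s : ℤ) :
    Dxy (mxy m0 F) p q s = mxy (m0+1) F p q s := by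
  obtain ⟨T, hT⟩ := qt_bound hF q s
  have h1 : mxy m0 F (p+1) q s = ∑ i ∈ range (T+1), cxy m0 i • F (p+1+m0-i) (q+i) s :=
    mxy_eq_sum fun i hi => hT i (by omega) _ _ rfl
  have h2 : mxy m0 F p (q+1) s = ∑ i ∈ range T, cxy m0 i • F (p+m0-i) ((q+1)+i) s :=
    mxy_eq_sum fun i hi => hT (i+1) (by omega) _ _ (by push_cast; ring)
  have h3 : mxy (m0+1) F p q s = ∑ i ∈ range (T+1), cxy (m0+1) i • F (p+(m0+1)-i) (q+i) s :=
    mxy_eq_sum fun i hi => hT i (by omega) _ _ rfl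
  rw [Dxy_apply, h1, h2, h3]
  have hXd : ∀ i : ℕ, F (p+1+m0-(i:ℤ)) (q+i) s = F (p+(m0+1)-(i:ℤ)) (q+i) s := by
    intro i; rw [show p+1+m0-(i:ℤ) = p+(m0+1)-i from by ring]
  have hYd : ∀ i : ℕ, F (p+m0-(i:ℤ)) ((q+1)+i) s = F (p+(m0+1)-((i+1:ℕ):ℤ)) (q+((i+1:ℕ):ℤ)) s := by
    intro i
    rw [show p+m0-(i:ℤ) = p+(m0+1)-((i+1:ℕ):ℤ) from by push_cast; ring,
        show (q+1)+(i:ℤ) = q+((i+1:ℕ):ℤ) from by push_cast; ring]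
  simp only [hXd, hYd]
  rw [Finset.sum_range_succ' (fun i => cxy (m0+1) i • F (p+(m0+1)-(i:ℤ)) (q+(i:ℤ)) s) T,
      Finset.sum_range_succ' (fun i => cxy m0 i • F (p+(m0+1)-(i:ℤ)) (q+(i:ℤ)) s) T]
  simp only [cxy_succ, sub_smul, Finset.sum_sub_distrib, cxy_zero]
  abel

lemma dxy_myx {F : Arr W} (hF : PT F) (m0 p q s : ℤ) :
    Dxy (myx m0 F) p q s = myx (m0+1) F p q s := by
  obtain ⟨T, hT⟩ := pt_bound hF p s
  have h1 : myx m0 F (p+1) q s = ∑ j ∈ range T, cyx m0 j • F ((p+1)+j) (q+m0-j) s :=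
    myx_eq_sum fun j hj => hT (j+1) (by omega) _ _ (by push_cast; ring)
  have h2 : myx m0 F p (q+1) s = ∑ j ∈ range (T+1), cyx m0 j • F (p+j) ((q+1)+m0-j) s :=
    myx_eq_sum fun j hj => hT j (by omega) _ _ rfl
  have h3 : myx (m0+1) F p q s = ∑ j ∈ range (T+1), cyx (m0+1) j • F (p+j) (q+(m0+1)-j) s :=
    myx_eq_sum fun j hj => hT j (by omega) _ _ rfl
  rw [Dxy_apply, h1, h2, h3]
  have hXd : ∀ j : ℕ, F ((p+1)+(j:ℤ)) (q+m0-j) s = F (p+((j+1:ℕ):ℤ)) (q+(m0+1)-((j+1:ℕ):ℤ)) s := by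
    intro j
    rw [show (p+1)+(j:ℤ) = p+((j+1:ℕ):ℤ) from by push_cast; ring,
        show q+m0-(j:ℤ) = q+(m0+1)-((j+1:ℕ):ℤ) from by push_cast; ring]
  have hYd : ∀ j : ℕ, F (p+(j:ℤ)) ((q+1)+m0-j) s = F (p+(j:ℤ)) (q+(m0+1)-(j:ℤ)) s := by
    intro j; rw [show (q+1)+m0-(j:ℤ) = q+(m0+1)-j from by ring]
  simp only [hXd, hYd]
  rw [Finset.sum_range_succ' (fun j => cyx (m0+1) j • F (p+(j:ℤ)) (q+(m0+1)-(j:ℤ)) s) T,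
      Finset.sum_range_succ' (fun j => cyx m0 j • F (p+(j:ℤ)) (q+(m0+1)-(j:ℤ)) s) T]
  simp only [cyx_succ, cyx_zero_succ, sub_smul, neg_smul, Finset.sum_sub_distrib]
  abel

lemma dxz_mxy {F : Arr W} (hF : QT F) (m0 p q s : ℤ) :
    Dxz (mxy m0 F) p q s = mxy m0 (Dxz F) p q s := by
  obtain ⟨T1, hT1⟩ := qt_bound hF q s
  obtain ⟨T2, hT2⟩ := qt_bound hF q (s+1)
  have h1 : mxy m0 F (p+1) q s = ∑ i ∈ range (max T1 T2), cxy m0 i • F (p+1+m0-i) (q+i) s :=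
    mxy_eq_sum fun i hi => hT1 i (by omega) _ _ rfl
  have h2 : mxy m0 F p q (s+1) = ∑ i ∈ range (max T1 T2), cxy m0 i • F (p+m0-i) (q+i) (s+1) :=
    mxy_eq_sum fun i hi => hT2 i (by omega) _ _ rfl
  have h3 : mxy m0 (Dxz F) p q s = ∑ i ∈ range (max T1 T2), cxy m0 i • (Dxz F) (p+m0-i) (q+i) s :=
    mxy_eq_sum fun i hi => by
      rw [Dxz_apply, hT1 i (by omega) _ _ rfl, hT2 i (by omega) _ _ rfl, sub_zero]
  rw [Dxz_apply, h1, h2, h3, ← Finset.sum_sub_distrib]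
  refine Finset.sum_congr rfl fun i _ => ?_
  rw [← smul_sub, Dxz_apply, show p+1+m0-(i:ℤ) = (p+m0-i)+1 from by ring]

lemma dyz_mxy {F : Arr W} (hF : QT F) (m0 p q s : ℤ) :
    Dyz (mxy m0 F) p q s = mxy m0 (Dyz F) p q s := by
  obtain ⟨T1, hT1⟩ := qt_bound hF q s
  obtain ⟨T2, hT2⟩ := qt_bound hF q (s+1)
  have h1 : mxy m0 F p (q+1) s = ∑ i ∈ range (max T1 T2), cxy m0 i • F (p+m0-i) ((q+1)+i) s :=
    mxy_eq_sum fun i hi => hT1 (i+1) (by omega) _ _ (by push_cast; ring)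
  have h2 : mxy m0 F p q (s+1) = ∑ i ∈ range (max T1 T2), cxy m0 i • F (p+m0-i) (q+i) (s+1) :=
    mxy_eq_sum fun i hi => hT2 i (by omega) _ _ rfl
  have h3 : mxy m0 (Dyz F) p q s = ∑ i ∈ range (max T1 T2), cxy m0 i • (Dyz F) (p+m0-i) (q+i) s :=
    mxy_eq_sum fun i hi => by
      rw [Dyz_apply, hT1 (i+1) (by omega) _ _ (by push_cast; ring), hT2 i (by omega) _ _ rfl, sub_zero]
  rw [Dyz_apply, h1, h2, h3, ← Finset.sum_sub_distrib]
  refine Finset.sum_congr rfl fun i _ => ?_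
  rw [← smul_sub, Dyz_apply, show (q+1)+(i:ℤ) = (q+i)+1 from by ring]

lemma dxz_myx {F : Arr W} (hF : PT F) (m0 p q s : ℤ) :
    Dxz (myx m0 F) p q s = myx m0 (Dxz F) p q s := by
  obtain ⟨T1, hT1⟩ := pt_bound hF p s
  obtain ⟨T2, hT2⟩ := pt_bound hF p (s+1)
  have h1 : myx m0 F (p+1) q s = ∑ j ∈ range (max T1 T2), cyx m0 j • F ((p+1)+j) (q+m0-j) s :=
    myx_eq_sum fun j hj => hT1 (j+1) (by omega) _ _ (by push_cast; ring)
  have h2 : myx m0 F p q (s+1) = ∑ j ∈ range (max T1 T2), cyx m0 j • F (p+j) (q+m0-j) (s+1) :=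
    myx_eq_sum fun j hj => hT2 j (by omega) _ _ rfl
  have h3 : myx m0 (Dxz F) p q s = ∑ j ∈ range (max T1 T2), cyx m0 j • (Dxz F) (p+j) (q+m0-j) s :=
    myx_eq_sum fun j hj => by
      rw [Dxz_apply, hT1 (j+1) (by omega) _ _ (by push_cast; ring), hT2 j (by omega) _ _ rfl, sub_zero]
  rw [Dxz_apply, h1, h2, h3, ← Finset.sum_sub_distrib]
  refine Finset.sum_congr rfl fun j _ => ?_
  rw [← smul_sub, Dxz_apply, show (p+1)+(j:ℤ) = (p+j)+1 from by ring]

lemma dyz_myx {F : Arr W} (hF : PT F) (m0 p q s : ℤ) :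
    Dyz (myx m0 F) p q s = myx m0 (Dyz F) p q s := by
  obtain ⟨T1, hT1⟩ := pt_bound hF p s
  obtain ⟨T2, hT2⟩ := pt_bound hF p (s+1)
  have h1 : myx m0 F p (q+1) s = ∑ j ∈ range (max T1 T2), cyx m0 j • F (p+j) ((q+1)+m0-j) s :=
    myx_eq_sum fun j hj => hT1 j (by omega) _ _ rfl
  have h2 : myx m0 F p q (s+1) = ∑ j ∈ range (max T1 T2), cyx m0 j • F (p+j) (q+m0-j) (s+1) :=
    myx_eq_sum fun j hj => hT2 j (by omega) _ _ rfl
  have h3 : myx m0 (Dyz F) p q s = ∑ j ∈ range (max T1 T2), cyx m0 j • (Dyz F) (p+j) (q+m0-j) s :=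
    myx_eq_sum fun j hj => by
      rw [Dyz_apply, hT1 j (by omega) _ _ rfl, hT2 j (by omega) _ _ rfl, sub_zero]
  rw [Dyz_apply, h1, h2, h3, ← Finset.sum_sub_distrib]
  refine Finset.sum_congr rfl fun j _ => ?_
  rw [← smul_sub, Dyz_apply, show (q+1)+m0-(j:ℤ) = (q+m0-j)+1 from by ring]

end MD


section MD2

variable {W : Type*} [AddCommGroup W] [Module ℂ W]

lemma qt_dxz {F : Arr W} (hF : QT F) : QT (Dxz F) := by
  intro s
  obtain ⟨T1, h1⟩ := hF s
  obtain ⟨T2, h2⟩ := hF (s+1)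
  exact ⟨max T1 T2, fun q hq p => by
    rw [Dxz_apply, h1 q (by omega), h2 q (by omega), sub_zero]⟩

lemma qt_dyz {F : Arr W} (hF : QT F) : QT (Dyz F) := by
  intro s
  obtain ⟨T1, h1⟩ := hF s
  obtain ⟨T2, h2⟩ := hF (s+1)
  exact ⟨max T1 T2, fun q hq p => by
    rw [Dyz_apply, h1 (q+1) (by omega), h2 q (by omega), sub_zero]⟩

lemma pt_dxz {F : Arr W} (hF : PT F) : PT (Dxz F) := by
  intro s
  obtain ⟨T1, h1⟩ := hF s
  obtain ⟨T2, h2⟩ := hF (s+1)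
  exact ⟨max T1 T2, fun p hp q => by
    rw [Dxz_apply, h1 (p+1) (by omega), h2 p (by omega), sub_zero]⟩

lemma pt_dyz {F : Arr W} (hF : PT F) : PT (Dyz F) := by
  intro s
  obtain ⟨T1, h1⟩ := hF s
  obtain ⟨T2, h2⟩ := hF (s+1)
  exact ⟨max T1 T2, fun p hp q => by
    rw [Dyz_apply, h1 p (by omega), h2 p (by omega), sub_zero]⟩

lemma qt_dxz_pow {F : Arr W} (hF : QT F) (k : ℕ) : QT ((Dxz ^ k) F) := by
  induction k with
  | zero => simpa using hF
  | succ k ih => rw [pow_succ', Module.End.mul_apply]; exact qt_dxz ih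

lemma pt_dxz_pow {F : Arr W} (hF : PT F) (k : ℕ) : PT ((Dxz ^ k) F) := by
  induction k with
  | zero => simpa using hF
  | succ k ih => rw [pow_succ', Module.End.mul_apply]; exact pt_dxz ih

lemma dxy_mxy_pow {F : Arr W} (hF : QT F) (k : ℕ) (m0 : ℤ) :
    (Dxy ^ k) (mxy m0 F) = mxy (m0 + k) F := by
  induction k with
  | zero => simp
  | succ k ih =>
    rw [pow_succ', Module.End.mul_apply, ih]
    funext p q s
    rw [dxy_mxy hF (m0 + k) p q s]
    norm_num [add_assoc]

lemma dxy_myx_pow {F : Arr W} (hF : PT F) (k : ℕ) (m0 : ℤ) :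
    (Dxy ^ k) (myx m0 F) = myx (m0 + k) F := by
  induction k with
  | zero => simp
  | succ k ih =>
    rw [pow_succ', Module.End.mul_apply, ih]
    funext p q s
    rw [dxy_myx hF (m0 + k) p q s]
    norm_num [add_assoc]

lemma dxz_mxy_pow {F : Arr W} (hF : QT F) (k : ℕ) (m0 : ℤ) :
    (Dxz ^ k) (mxy m0 F) = mxy m0 ((Dxz ^ k) F) := by
  induction k with
  | zero => simp
  | succ k ih =>
    rw [pow_succ', Module.End.mul_apply, ih]
    funext p q s
    rw [dxz_mxy (qt_dxz_pow hF k) m0 p q s, Module.End.mul_apply]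

lemma qt_dyz_pow {F : Arr W} (hF : QT F) (k : ℕ) : QT ((Dyz ^ k) F) := by
  induction k with
  | zero => simpa using hF
  | succ k ih => rw [pow_succ', Module.End.mul_apply]; exact qt_dyz ih

lemma pt_dyz_pow {F : Arr W} (hF : PT F) (k : ℕ) : PT ((Dyz ^ k) F) := by
  induction k with
  | zero => simpa using hF
  | succ k ih => rw [pow_succ', Module.End.mul_apply]; exact pt_dyz ih

lemma dyz_mxy_pow {F : Arr W} (hF : QT F) (k : ℕ) (m0 : ℤ) :
    (Dyz ^ k) (mxy m0 F) = mxy m0 ((Dyz ^ k) F) := by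
  induction k with
  | zero => simp
  | succ k ih =>
    rw [pow_succ', Module.End.mul_apply, ih]
    funext p q s
    rw [dyz_mxy (qt_dyz_pow hF k) m0 p q s, Module.End.mul_apply]

lemma dyz_myx_pow {F : Arr W} (hF : PT F) (k : ℕ) (m0 : ℤ) :
    (Dyz ^ k) (myx m0 F) = myx m0 ((Dyz ^ k) F) := by
  induction k with
  | zero => simp
  | succ k ih =>
    rw [pow_succ', Module.End.mul_apply, ih]
    funext p q s
    rw [dyz_myx (pt_dyz_pow hF k) m0 p q s, Module.End.mul_apply]

lemma dxz_myx_pow {F : Arr W} (hF : PT F) (k : ℕ) (m0 : ℤ) :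
    (Dxz ^ k) (myx m0 F) = myx m0 ((Dxz ^ k) F) := by
  induction k with
  | zero => simp
  | succ k ih =>
    rw [pow_succ', Module.End.mul_apply, ih]
    funext p q s
    rw [dxz_myx (pt_dxz_pow hF k) m0 p q s, Module.End.mul_apply]

end MD2


section MD3

variable {W : Type*} [AddCommGroup W] [Module ℂ W]

lemma mxy_natCast (n : ℕ) (F : Arr W) (p q s : ℤ) :
    mxy ((n:ℕ):ℤ) F p q s
      = ∑ t ∈ range (n+1), ((-1:ℂ)^t * (n.choose t : ℂ)) • F (p + (n:ℤ) - t) (q + t) s := by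
  have h1 : mxy ((n:ℕ):ℤ) F p q s
      = ∑ i ∈ range (n+1), cxy (n:ℤ) i • F (p + (n:ℤ) - i) (q + i) s :=
    finsum_nat_eq_sum _ _ (fun i hi => by
      unfold cxy
      rw [cchoose_nat_zero n i (by omega)]
      simp)
  rw [h1]
  refine Finset.sum_congr rfl fun t ht => ?_
  have ht' : t ≤ n := by simp at ht; omega
  unfold cxy
  rw [cchoose_nat_eq n t ht']

lemma myx_natCast (n : ℕ) (F : Arr W) (p q s : ℤ) :
    myx ((n:ℕ):ℤ) F p q s
      = ∑ t ∈ range (n+1), ((-1:ℂ)^t * (n.choose t : ℂ)) • F (p + (n:ℤ) - t) (q + t) s := by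
  have h1 : myx ((n:ℕ):ℤ) F p q s
      = ∑ j ∈ range (n+1), cyx (n:ℤ) j • F (p + j) (q + (n:ℤ) - j) s :=
    finsum_nat_eq_sum _ _ (fun j hj => by
      unfold cyx
      rw [cchoose_nat_zero n j (by omega)]
      simp)
  rw [h1, ← Finset.sum_range_reflect]
  refine Finset.sum_congr rfl fun t ht => ?_
  have ht' : t ≤ n := by simp at ht; omega
  rw [show n + 1 - 1 - t = n - t from by omega]
  unfold cyx
  rw [cchoose_nat_eq n (n - t) (by omega), Nat.choose_symm ht']
  rw [show (n:ℤ) - ((n-t:ℕ):ℤ) = ((t:ℕ):ℤ) from by omega]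
  rw [zpow_natCast]
  rw [show p + ((n-t:ℕ):ℤ) = p + (n:ℤ) - t from by omega,
      show q + (n:ℤ) - ((n-t:ℕ):ℤ) = q + (t:ℤ) from by omega]

lemma swap_smul {R M : Type*} [Monoid R] [MulAction R M] {r r' : R} (h : Commute r r') (v : M) :
    r • r' • v = r' • r • v := by
  rw [smul_smul, smul_smul, h.eq]

lemma swap_app {S : Type*} [AddCommGroup S] [Module ℂ S] {f g : Module.End ℂ S}
    (h : Commute f g) (v : S) : f (g v) = g (f v) := by
  rw [← Module.End.mul_apply, ← Module.End.mul_apply, h.eq]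

lemma end_dong {S : Type*} [AddCommGroup S] [Module ℂ S]
    (x z : Module.End ℂ S) (hcomm : Commute x z) (A B C : ℕ) (t : S)
    (h1 : (x ^ A) t = 0) (h2 : ((z - x) ^ B * z ^ C) t = 0) :
    ((z - x) ^ (B + (A + C))) t = 0 := by
  have hzx : Commute z (-x) := hcomm.symm.neg_right
  have hexp : (z - x) ^ (A + C)
      = ∑ i ∈ range (A + C + 1), z ^ i * (-x) ^ (A + C - i) * ((A+C).choose i : Module.End ℂ S) := by
    rw [sub_eq_add_neg]
    exact hzx.add_pow _
  rw [pow_add, Module.End.mul_apply, hexp, LinearMap.sum_apply, map_sum]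
  refine Finset.sum_eq_zero fun i _ => ?_
  rw [Module.End.mul_apply, Module.End.mul_apply]
  rcases le_or_gt i C with hiC | hiC
  · have hAc : A + C - i = (C - i) + A := by omega
    have hx : ((-x) ^ (A + C - i)) ((((A+C).choose i : Module.End ℂ S)) t) = 0 := by
      have hxa : (x ^ A) ((((A+C).choose i : Module.End ℂ S)) t) = 0 := by
        rw [Module.End.natCast_apply, map_nsmul, h1, smul_zero]
      have hxa2 : ((-x) ^ A) ((((A+C).choose i : Module.End ℂ S)) t) = 0 := by
        rw [neg_pow, Module.End.mul_apply, hxa, map_zero]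
      rw [hAc, pow_add, Module.End.mul_apply, hxa2, map_zero]
    rw [hx, map_zero, map_zero]
  · have hzi : z ^ i = z ^ (i - C) * z ^ C := by rw [← pow_add]; congr 1; omega
    have c1 : Commute (z ^ C) ((-x) ^ (A + C - i)) := hzx.pow_pow _ _
    have c2 : Commute (z ^ C) (((A+C).choose i : Module.End ℂ S)) := (Nat.cast_commute _ _).symm
    have c3 : Commute ((z - x) ^ B) (z ^ (i - C)) :=
      (((Commute.refl z).sub_left hcomm).pow_pow _ _)
    have c4 : Commute ((z - x) ^ B) ((-x) ^ (A + C - i)) :=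
      ((hzx.sub_left ((Commute.refl x).neg_right)).pow_pow _ _)
    have c5 : Commute ((z - x) ^ B) (((A+C).choose i : Module.End ℂ S)) := (Nat.cast_commute _ _).symm
    rw [hzi, Module.End.mul_apply, swap_app c1, swap_app c2, swap_app c3, swap_app c4, swap_app c5,
        ← Module.End.mul_apply ((z-x)^B) (z^C), h2, map_zero, map_zero, map_zero]

end MD3


section Core

variable {W : Type*} [AddCommGroup W] [Module ℂ W]

def fABC (a b c : ℤ → W → W) (w : W) : Arr W := fun p q s => a p (b q (c s w))
def fBAC (a b c : ℤ → W → W) (w : W) : Arr W := fun p q s => b q (a p (c s w))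
def fACB (a b c : ℤ → W → W) (w : W) : Arr W := fun p q s => a p (c s (b q w))
def fBCA (a b c : ℤ → W → W) (w : W) : Arr W := fun p q s => b q (c s (a p w))
def fCAB (a b c : ℤ → W → W) (w : W) : Arr W := fun p q s => c s (a p (b q w))
def fCBA (a b c : ℤ → W → W) (w : W) : Arr W := fun p q s => c s (b q (a p w))

noncomputable def dop (a b : ℤ → W → W) (m0 : ℤ) (n : ℤ) (v : W) : W :=
  (∑ᶠ i : ℕ, ((-1:ℂ)^i * cchoose m0 i) • a (m0 - i) (b (n + i) v))
  - ∑ᶠ j : ℕ, ((-1:ℂ)^(m0 - (j:ℤ)) * cchoose m0 j) • b (m0 - j + n) (a j v)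

variable {a b c : ℤ → W → W} {w : W}

theorem core
    (ha : ∀ n, IsLinearMap ℂ (a n)) (hb : ∀ n, IsLinearMap ℂ (b n)) (hc : ∀ n, IsLinearMap ℂ (c n))
    (hat : ∀ v : W, ∃ T : ℤ, ∀ n, T ≤ n → a n v = 0)
    (hbt : ∀ v : W, ∃ T : ℤ, ∀ n, T ≤ n → b n v = 0)
    (kab kac kbc : ℕ) (m0 : ℤ)
    (Hab : ∀ (v : W) (p q : ℤ),
      ∑ t ∈ range (kab+1), ((-1:ℂ)^t * (kab.choose t : ℂ)) • a (p + kab - t) (b (q + t) v)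
      = ∑ t ∈ range (kab+1), ((-1:ℂ)^t * (kab.choose t : ℂ)) • b (q + t) (a (p + kab - t) v))
    (Hac : ∀ (v : W) (p q : ℤ),
      ∑ t ∈ range (kac+1), ((-1:ℂ)^t * (kac.choose t : ℂ)) • a (p + kac - t) (c (q + t) v)
      = ∑ t ∈ range (kac+1), ((-1:ℂ)^t * (kac.choose t : ℂ)) • c (q + t) (a (p + kac - t) v))
    (Hbc : ∀ (v : W) (p q : ℤ),
      ∑ t ∈ range (kbc+1), ((-1:ℂ)^t * (kbc.choose t : ℂ)) • b (p + kbc - t) (c (q + t) v)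
      = ∑ t ∈ range (kbc+1), ((-1:ℂ)^t * (kbc.choose t : ℂ)) • c (q + t) (b (p + kbc - t) v))
    (K : ℕ) (hK : K = kbc + ((kab + (-m0).toNat) + kac))
    (w : W) (p0 q0 : ℤ) :
    ∑ t ∈ range (K+1), ((-1:ℂ)^t * (K.choose t : ℂ)) • dop a b m0 (p0 + K - t) (c (q0 + t) w)
    = ∑ t ∈ range (K+1), ((-1:ℂ)^t * (K.choose t : ℂ)) • c (q0 + t) (dop a b m0 (p0 + K - t) w) := by
  classical
  set kA : ℕ := kab + (-m0).toNat with hkA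
  set κ : ℕ := kab + m0.toNat with hκ
  -- truncation facts for the four relevant arrays
  have hQT1 : QT (fABC a b c w) := by
    intro s
    obtain ⟨T, hT⟩ := hbt (c s w)
    exact ⟨T, fun q hq p => by show a p (b q (c s w)) = 0; rw [hT q hq]; exact (ha p).map_zero⟩
  have hQT2 : QT (fCAB a b c w) := by
    intro s
    obtain ⟨T, hT⟩ := hbt w
    refine ⟨T, fun q hq p => ?_⟩
    show c s (a p (b q w)) = 0
    rw [hT q hq, (ha p).map_zero]
    exact (hc s).map_zero
  have hPT1 : PT (fBAC a b c w) := by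
    intro s
    obtain ⟨T, hT⟩ := hat (c s w)
    exact ⟨T, fun p hp q => by show b q (a p (c s w)) = 0; rw [hT p hp]; exact (hb q).map_zero⟩
  have hPT2 : PT (fCBA a b c w) := by
    intro s
    obtain ⟨T, hT⟩ := hat w
    refine ⟨T, fun p hp q => ?_⟩
    show c s (b q (a p w)) = 0
    rw [hT p hp, (hb q).map_zero]
    exact (hc s).map_zero
  -- locality swap lemmas
  have swab_in : (Dxy ^ kab) (fABC a b c w) = (Dxy ^ kab) (fBAC a b c w) := by
    funext p q s
    rw [pow_xy, pow_xy]
    exact Hab (c s w) p q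
  have swab_out : (Dxy ^ kab) (fCAB a b c w) = (Dxy ^ kab) (fCBA a b c w) := by
    funext p q s
    rw [pow_xy, pow_xy]
    have h1 : ∑ t ∈ range (kab+1), ((-1:ℂ)^t * (kab.choose t : ℂ)) • (fCAB a b c w) (p+kab-t) (q+t) s
        = (IsLinearMap.mk' (c s) (hc s)) (∑ t ∈ range (kab+1), ((-1:ℂ)^t * (kab.choose t : ℂ)) • a (p+kab-t) (b (q+t) w)) := by
      rw [map_sum]
      exact Finset.sum_congr rfl fun t _ => by rw [LinearMap.map_smul]; rfl
    have h2 : ∑ t ∈ range (kab+1), ((-1:ℂ)^t * (kab.choose t : ℂ)) • (fCBA a b c w) (p+kab-t) (q+t) s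
        = (IsLinearMap.mk' (c s) (hc s)) (∑ t ∈ range (kab+1), ((-1:ℂ)^t * (kab.choose t : ℂ)) • b (q+t) (a (p+kab-t) w)) := by
      rw [map_sum]
      exact Finset.sum_congr rfl fun t _ => by rw [LinearMap.map_smul]; rfl
    rw [h1, h2, Hab w p q]
  have swbc_in : (Dyz ^ kbc) (fABC a b c w) = (Dyz ^ kbc) (fACB a b c w) := by
    funext p q s
    rw [pow_yz, pow_yz]
    have h1 : ∑ t ∈ range (kbc+1), ((-1:ℂ)^t * (kbc.choose t : ℂ)) • (fABC a b c w) p (q+kbc-t) (s+t)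
        = (IsLinearMap.mk' (a p) (ha p)) (∑ t ∈ range (kbc+1), ((-1:ℂ)^t * (kbc.choose t : ℂ)) • b (q+kbc-t) (c (s+t) w)) := by
      rw [map_sum]
      exact Finset.sum_congr rfl fun t _ => by rw [LinearMap.map_smul]; rfl
    have h2 : ∑ t ∈ range (kbc+1), ((-1:ℂ)^t * (kbc.choose t : ℂ)) • (fACB a b c w) p (q+kbc-t) (s+t)
        = (IsLinearMap.mk' (a p) (ha p)) (∑ t ∈ range (kbc+1), ((-1:ℂ)^t * (kbc.choose t : ℂ)) • c (s+t) (b (q+kbc-t) w)) := by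
      rw [map_sum]
      exact Finset.sum_congr rfl fun t _ => by rw [LinearMap.map_smul]; rfl
    rw [h1, h2, Hbc w q s]
  have swbc_out : (Dyz ^ kbc) (fBCA a b c w) = (Dyz ^ kbc) (fCBA a b c w) := by
    funext p q s
    rw [pow_yz, pow_yz]
    exact Hbc (a p w) q s
  have swac_mid : (Dxz ^ kac) (fACB a b c w) = (Dxz ^ kac) (fCAB a b c w) := by
    funext p q s
    rw [pow_xz, pow_xz]
    exact Hac (b q w) p s
  have swac_b : (Dxz ^ kac) (fBAC a b c w) = (Dxz ^ kac) (fBCA a b c w) := by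
    funext p q s
    rw [pow_xz, pow_xz]
    have h1 : ∑ t ∈ range (kac+1), ((-1:ℂ)^t * (kac.choose t : ℂ)) • (fBAC a b c w) (p+kac-t) q (s+t)
        = (IsLinearMap.mk' (b q) (hb q)) (∑ t ∈ range (kac+1), ((-1:ℂ)^t * (kac.choose t : ℂ)) • a (p+kac-t) (c (s+t) w)) := by
      rw [map_sum]
      exact Finset.sum_congr rfl fun t _ => by rw [LinearMap.map_smul]; rfl
    have h2 : ∑ t ∈ range (kac+1), ((-1:ℂ)^t * (kac.choose t : ℂ)) • (fBCA a b c w) (p+kac-t) q (s+t)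
        = (IsLinearMap.mk' (b q) (hb q)) (∑ t ∈ range (kac+1), ((-1:ℂ)^t * (kac.choose t : ℂ)) • c (s+t) (a (p+kac-t) w)) := by
      rw [map_sum]
      exact Finset.sum_congr rfl fun t _ => by rw [LinearMap.map_smul]; rfl
    rw [h1, h2, Hac w p s]
  -- step I : Dxy^kA kills Theta
  have hmx : ∀ F : Arr W, mxy ((κ:ℕ):ℤ) F = (Dxy ^ κ) F := by
    intro F; funext p q s; rw [mxy_natCast, ← pow_xy]
  have hmy : ∀ F : Arr W, myx ((κ:ℕ):ℤ) F = (Dxy ^ κ) F := by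
    intro F; funext p q s; rw [myx_natCast, ← pow_xy]
  have hcast : m0 + (kA:ℤ) = ((κ:ℕ):ℤ) := by omega
  have hpowsplit : ∀ F G : Arr W, (Dxy ^ kab) F = (Dxy ^ kab) G → (Dxy ^ κ) F = (Dxy ^ κ) G := by
    intro F G h
    have : κ = m0.toNat + kab := by omega
    rw [this, pow_add, Module.End.mul_apply, Module.End.mul_apply, h]
  have stepI : (Dxy ^ kA) ((mxy m0 (fABC a b c w) - myx m0 (fBAC a b c w))
      - (mxy m0 (fCAB a b c w) - myx m0 (fCBA a b c w))) = 0 := by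
    rw [map_sub, map_sub, map_sub]
    rw [dxy_mxy_pow hQT1, dxy_myx_pow hPT1, dxy_mxy_pow hQT2, dxy_myx_pow hPT2]
    rw [hcast, hmx, hmy, hmx, hmy]
    rw [hpowsplit _ _ swab_in, hpowsplit _ _ swab_out]
    abel
  -- step II : Dyz^kbc Dxz^kac kills Theta
  have E1 : (Dyz ^ kbc) ((Dxz ^ kac) (fABC a b c w)) = (Dyz ^ kbc) ((Dxz ^ kac) (fCAB a b c w)) := by
    have hcom : ∀ F : Arr W, (Dyz ^ kbc) ((Dxz ^ kac) F) = (Dxz ^ kac) ((Dyz ^ kbc) F) := by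
      intro F
      rw [← Module.End.mul_apply, ← Module.End.mul_apply, (comm_yz_xz.pow_pow kbc kac).eq]
    rw [hcom, swbc_in, ← hcom, swac_mid]
  have E2 : (Dyz ^ kbc) ((Dxz ^ kac) (fBAC a b c w)) = (Dyz ^ kbc) ((Dxz ^ kac) (fCBA a b c w)) := by
    rw [swac_b]
    have hcom : ∀ F : Arr W, (Dyz ^ kbc) ((Dxz ^ kac) F) = (Dxz ^ kac) ((Dyz ^ kbc) F) := by
      intro F
      rw [← Module.End.mul_apply, ← Module.End.mul_apply, (comm_yz_xz.pow_pow kbc kac).eq]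
    rw [hcom, swbc_out, ← hcom]
  have stepII : (Dyz ^ kbc) ((Dxz ^ kac) ((mxy m0 (fABC a b c w) - myx m0 (fBAC a b c w))
      - (mxy m0 (fCAB a b c w) - myx m0 (fCBA a b c w)))) = 0 := by
    rw [map_sub, map_sub, map_sub, map_sub, map_sub, map_sub]
    rw [dxz_mxy_pow hQT1, dxz_myx_pow hPT1, dxz_mxy_pow hQT2, dxz_myx_pow hPT2]
    rw [dyz_mxy_pow (qt_dxz_pow hQT1 kac), dyz_myx_pow (pt_dxz_pow hPT1 kac),
        dyz_mxy_pow (qt_dxz_pow hQT2 kac), dyz_myx_pow (pt_dxz_pow hPT2 kac)]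
    rw [E1, E2]
    abel
  -- step III : end_dong
  have stepIII : (Dyz ^ K) ((mxy m0 (fABC a b c w) - myx m0 (fBAC a b c w))
      - (mxy m0 (fCAB a b c w) - myx m0 (fCBA a b c w))) = 0 := by
    have h3 := end_dong Dxy Dxz comm_xy_xz kA kbc kac
      ((mxy m0 (fABC a b c w) - myx m0 (fBAC a b c w))
        - (mxy m0 (fCAB a b c w) - myx m0 (fCBA a b c w))) stepI (by
          rw [← dyz_eq, Module.End.mul_apply]
          exact stepII)
    rw [← dyz_eq] at h3
    rw [hK]
    exact h3
  -- interpret dop via the arrays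
  have hPhi : ∀ n s : ℤ, (mxy m0 (fABC a b c w) - myx m0 (fBAC a b c w)) 0 n s
      = dop a b m0 n (c s w) := by
    intro n s
    show mxy m0 (fABC a b c w) 0 n s - myx m0 (fBAC a b c w) 0 n s = _
    unfold mxy myx dop cxy cyx fABC fBAC
    congr 1
    · exact finsum_congr fun i => by rw [show (0:ℤ)+m0-(i:ℤ) = m0 - i from by ring]
    · exact finsum_congr fun j => by
        rw [show (0:ℤ)+(j:ℤ) = (j:ℤ) from by ring, show n+m0-(j:ℤ) = m0-j+n from by ring]
  have hPsi : ∀ n s : ℤ, (mxy m0 (fCAB a b c w) - myx m0 (fCBA a b c w)) 0 n s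
      = c s (dop a b m0 n w) := by
    intro n s
    obtain ⟨Tb, hTb⟩ := hbt w
    obtain ⟨Ta, hTa⟩ := hat w
    set T1 : ℕ := (Tb - n).toNat + 1 with hT1
    set T2 : ℕ := Ta.toNat + 1 with hT2
    have hb0 : ∀ i : ℕ, T1 ≤ i → b (n + i) w = 0 := fun i hi => hTb _ (by omega)
    have ha0 : ∀ j : ℕ, T2 ≤ j → a j w = 0 := fun j hj => hTa _ (by omega)
    have e1 : mxy m0 (fCAB a b c w) 0 n s
        = ∑ i ∈ range T1, cxy m0 i • c s (a (0+m0-i) (b (n+i) w)) :=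
      mxy_eq_sum fun i hi => by
        show c s (a (0+m0-i) (b (n+i) w)) = 0
        rw [hb0 i hi, (ha _).map_zero, (hc s).map_zero]
    have e2 : myx m0 (fCBA a b c w) 0 n s
        = ∑ j ∈ range T2, cyx m0 j • c s (b (n+m0-j) (a (0+j) w)) :=
      myx_eq_sum fun j hj => by
        show c s (b (n+m0-j) (a (0+j) w)) = 0
        have : a ((0:ℤ)+j) w = 0 := by rw [show (0:ℤ)+(j:ℤ) = (j:ℤ) from by ring]; exact ha0 j hj
        rw [this, (hb _).map_zero, (hc s).map_zero]
    have e3 : (∑ᶠ i : ℕ, ((-1:ℂ)^i * cchoose m0 i) • a (m0 - i) (b (n + i) w))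
        = ∑ i ∈ range T1, cxy m0 i • a (m0-i) (b (n+i) w) :=
      finsum_nat_eq_sum _ _ fun i hi => by rw [hb0 i hi, (ha _).map_zero, smul_zero]
    have e4 : (∑ᶠ j : ℕ, ((-1:ℂ)^(m0 - (j:ℤ)) * cchoose m0 j) • b (m0 - j + n) (a j w))
        = ∑ j ∈ range T2, cyx m0 j • b (m0-j+n) (a j w) :=
      finsum_nat_eq_sum _ _ fun j hj => by rw [ha0 j hj, (hb _).map_zero, smul_zero]
    show mxy m0 (fCAB a b c w) 0 n s - myx m0 (fCBA a b c w) 0 n s = _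
    rw [e1, e2]
    unfold dop
    rw [e3, e4]
    have hsub : c s ((∑ i ∈ range T1, cxy m0 i • a (m0-i) (b (n+i) w))
          - ∑ j ∈ range T2, cyx m0 j • b (m0-j+n) (a j w))
        = (IsLinearMap.mk' (c s) (hc s)) (∑ i ∈ range T1, cxy m0 i • a (m0-i) (b (n+i) w))
          - (IsLinearMap.mk' (c s) (hc s)) (∑ j ∈ range T2, cyx m0 j • b (m0-j+n) (a j w)) :=
      by exact map_sub (IsLinearMap.mk' (c s) (hc s)) _ _
    rw [hsub, map_sum, map_sum]
    have g1 : ∀ i : ℕ, cxy m0 i • c s (a (0+m0-i) (b (n+i) w))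
        = (IsLinearMap.mk' (c s) (hc s)) (cxy m0 i • a (m0-i) (b (n+i) w)) := by
      intro i
      rw [LinearMap.map_smul, show (0:ℤ)+m0-(i:ℤ) = m0-i from by ring]
      rfl
    have g2 : ∀ j : ℕ, cyx m0 j • c s (b (n+m0-j) (a (0+j) w))
        = (IsLinearMap.mk' (c s) (hc s)) (cyx m0 j • b (m0-j+n) (a j w)) := by
      intro j
      rw [LinearMap.map_smul, show (0:ℤ)+(j:ℤ) = (j:ℤ) from by ring,
          show n+m0-(j:ℤ) = m0-j+n from by ring]
      rfl
    rw [Finset.sum_congr rfl fun i _ => g1 i, Finset.sum_congr rfl fun j _ => g2 j]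
  -- final assembly
  have key : (Dyz ^ K) (mxy m0 (fABC a b c w) - myx m0 (fBAC a b c w))
      = (Dyz ^ K) (mxy m0 (fCAB a b c w) - myx m0 (fCBA a b c w)) := by
    have := stepIII
    rw [map_sub] at this
    exact sub_eq_zero.mp this
  calc ∑ t ∈ range (K+1), ((-1:ℂ)^t * (K.choose t : ℂ)) • dop a b m0 (p0 + K - t) (c (q0 + t) w)
      = ∑ t ∈ range (K+1), ((-1:ℂ)^t * (K.choose t : ℂ)) •
          (mxy m0 (fABC a b c w) - myx m0 (fBAC a b c w)) 0 (p0 + K - t) (q0 + t) :=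
        Finset.sum_congr rfl fun t _ => by rw [hPhi]
    _ = (Dyz ^ K) (mxy m0 (fABC a b c w) - myx m0 (fBAC a b c w)) 0 p0 q0 := (pow_yz _ _ _ _ _).symm
    _ = (Dyz ^ K) (mxy m0 (fCAB a b c w) - myx m0 (fCBA a b c w)) 0 p0 q0 := by rw [key]
    _ = ∑ t ∈ range (K+1), ((-1:ℂ)^t * (K.choose t : ℂ)) •
          (mxy m0 (fCAB a b c w) - myx m0 (fCBA a b c w)) 0 (p0 + K - t) (q0 + t) := pow_yz _ _ _ _ _
    _ = ∑ t ∈ range (K+1), ((-1:ℂ)^t * (K.choose t : ℂ)) • c (q0 + t) (dop a b m0 (p0 + K - t) w) :=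
        Finset.sum_congr rfl fun t _ => by rw [hPsi]

end Core

end Stmt13Aux


open Finset Stmt13Aux in
/-- If `a, b, c ∈ E(W,r)` are pairwise mutually local, then for any
`(m0, m) ∈ ℤ × ℤ^r` the element `a_{m0,m}b` of `E(W,r)` is mutually local
with `c`. -/
theorem stmt13 {r : ℕ} {W : Type*} [AddCommGroup W] [Module ℂ W]
    (A B C : ECoeff r W)
    (hAlin : ∀ n m, IsLinearMap ℂ (A n m)) (hBlin : ∀ n m, IsLinearMap ℂ (B n m))
    (hClin : ∀ n m, IsLinearMap ℂ (C n m))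
    (hAtr : ETrunc A) (hBtr : ETrunc B) (hCtr : ETrunc C)
    (hab : ∃ k, LocalTo k A B) (hac : ∃ k, LocalTo k A C)
    (hbc : ∃ k, LocalTo k B C) :
    ∀ (m0 : ℤ) (m : Fin r → ℤ), ∃ K : ℕ, LocalTo K (prodCoeff A B m0 m) C := by
  intro m0 m
  obtain ⟨kab, hab⟩ := hab
  obtain ⟨kac, hac⟩ := hac
  obtain ⟨kbc, hbc⟩ := hbc
  refine ⟨kbc + ((kab + (-m0).toNat) + kac), ?_⟩
  intro w P Q M N
  have hMm : (-(M+m) : Fin r → ℤ) = -M - m := by rw [neg_add, ← sub_eq_add_neg]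
  have HabP : ∀ (v : W) (p q : ℤ),
      ∑ t ∈ range (kab+1), ((-1:ℂ)^t * (kab.choose t : ℂ)) •
        A (p + kab - t) m (B (q + t) (-M - m) v)
      = ∑ t ∈ range (kab+1), ((-1:ℂ)^t * (kab.choose t : ℂ)) •
        B (q + t) (-M - m) (A (p + kab - t) m v) := by
    intro v p q
    have h := hab v (-p-1) (-q-1) (-m) (M+m)
    simp only [show ∀ t:ℕ, (kab:ℤ)-t-(-p-1)-1 = p+kab-t from fun t => by ring,
               show ∀ t:ℕ, (t:ℤ)-(-q-1)-1 = q+t from fun t => by ring,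
               neg_neg, hMm] at h
    exact h
  have HacP : ∀ (v : W) (p q : ℤ),
      ∑ t ∈ range (kac+1), ((-1:ℂ)^t * (kac.choose t : ℂ)) •
        A (p + kac - t) m (C (q + t) (-N) v)
      = ∑ t ∈ range (kac+1), ((-1:ℂ)^t * (kac.choose t : ℂ)) •
        C (q + t) (-N) (A (p + kac - t) m v) := by
    intro v p q
    have h := hac v (-p-1) (-q-1) (-m) N
    simp only [show ∀ t:ℕ, (kac:ℤ)-t-(-p-1)-1 = p+kac-t from fun t => by ring,
               show ∀ t:ℕ, (t:ℤ)-(-q-1)-1 = q+t from fun t => by ring,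
               neg_neg] at h
    exact h
  have HbcP : ∀ (v : W) (p q : ℤ),
      ∑ t ∈ range (kbc+1), ((-1:ℂ)^t * (kbc.choose t : ℂ)) •
        B (p + kbc - t) (-M - m) (C (q + t) (-N) v)
      = ∑ t ∈ range (kbc+1), ((-1:ℂ)^t * (kbc.choose t : ℂ)) •
        C (q + t) (-N) (B (p + kbc - t) (-M - m) v) := by
    intro v p q
    have h := hbc v (-p-1) (-q-1) (M+m) N
    simp only [show ∀ t:ℕ, (kbc:ℤ)-t-(-p-1)-1 = p+kbc-t from fun t => by ring,
               show ∀ t:ℕ, (t:ℤ)-(-q-1)-1 = q+t from fun t => by ring,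
               hMm] at h
    exact h
  have hcore := core (a := fun n => A n m) (b := fun n v => B n (-M - m) v)
    (c := fun n v => C n (-N) v)
    (fun n => hAlin n m) (fun n => hBlin n (-M-m)) (fun n => hClin n (-N))
    (fun v => (hAtr v).imp fun T hT => fun n hn => hT n hn m)
    (fun v => (hBtr v).imp fun T hT => fun n hn => hT n hn (-M-m))
    kab kac kbc m0 HabP HacP HbcP
    (kbc + ((kab + (-m0).toNat) + kac)) rfl w (-P-1) (-Q-1)
  have hdop : ∀ (n : ℤ) (v : W), prodCoeff A B m0 m n (-M) v
      = dop (fun n => A n m) (fun n v => B n (-M - m) v) m0 n v := fun n v => rfl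
  simp only [show ∀ t:ℕ, ((kbc + ((kab + (-m0).toNat) + kac) : ℕ):ℤ)-t-P-1
        = (-P-1) + ((kbc + ((kab + (-m0).toNat) + kac) : ℕ):ℤ) - t from fun t => by ring,
      show ∀ t:ℕ, (t:ℤ)-Q-1 = (-Q-1) + t from fun t => by ring, hdop]
  exact hcore
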